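/- arXiv:1406.2721 — 2 statements merged into one kernel-verified Lean document; each statement's English description precedes it below -/
import Mathlib

section
/- Let Θ* be a real symmetric positive definite p×p matrix, let M > 2 be a constant, and let Δ be a real symmetric p×p matrix with ‖Δ‖_{F*}² ≤ 1/(2M²). Then Θ* + Δ is positive definite and the first-order Taylor remainder of the Gaussian negative log-likelihood satisfies δL(Δ; Θ*) := Tr(Θ*⁻¹Δ) − log det(Θ* + Δ) + log det(Θ*) ≥ ((M−2)/(2(M−1))) · ‖Δ‖_{F*}². -/
open Matrix
open scoped MatrixOrder

lemma log_quad_bound {r x : ℝ} (hr0 : 0 ≤ r) (hr1 : r < 1) (hx : |x| ≤ r) :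
    x ^ 2 / (2 * (1 + r)) ≤ x - Real.log (1 + x) := by
  have hrpos : (0:ℝ) < 1 + r := by linarith
  obtain ⟨hx1, hx2⟩ := abs_le.mp hx
  set f : ℝ → ℝ := fun y => y - Real.log (1 + y) - y ^ 2 / (2 * (1 + r)) with hf
  set f' : ℝ → ℝ := fun y => 1 - (1 + y)⁻¹ - y / (1 + r) with hf'
  have hderiv : ∀ y : ℝ, -1 < y → HasDerivAt f (f' y) y := by
    intro y hy
    have h1 : HasDerivAt (fun y : ℝ => 1 + y) 1 y := by
      simpa using (hasDerivAt_id y).const_add 1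
    have h2 : HasDerivAt (fun y : ℝ => Real.log (1 + y)) ((1 + y)⁻¹) y := by
      have h := (Real.hasDerivAt_log (show (1:ℝ) + y ≠ 0 by linarith)).comp y h1
      rw [mul_one] at h; exact h
    have h3 : HasDerivAt (fun y : ℝ => y ^ 2 / (2 * (1 + r))) (y / (1 + r)) y := by
      have := (hasDerivAt_pow 2 y).div_const (2 * (1 + r))
      have e : ((2:ℕ):ℝ) * y ^ (2 - 1) / (2 * (1 + r)) = y / (1 + r) := by
        rw [pow_one, Nat.cast_ofNat, mul_div_mul_left _ _ two_ne_zero]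
      rw [e] at this; exact this
    exact ((hasDerivAt_id' y).sub h2).sub h3
  have hf'eq : ∀ y : ℝ, -1 < y → f' y = y / (1 + y) - y / (1 + r) := by
    intro y hy
    have h1 : (0:ℝ) < 1 + y := by linarith
    simp only [hf']
    field_simp
    ring
  have hcont : ∀ y : ℝ, -1 < y → ContinuousAt f y := fun y hy => (hderiv y hy).continuousAt
  have hf0 : f 0 = 0 := by simp [hf]
  have key : 0 ≤ f x := by
    rcases le_or_gt 0 x with hx0 | hx0
    · have hmono : MonotoneOn f (Set.Icc 0 r) := by
        apply monotoneOn_of_hasDerivWithinAt_nonneg (convex_Icc 0 r) (f' := f')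
        · intro y hy
          exact (hcont y (by linarith [hy.1])).continuousWithinAt
        · intro y hy
          have hy' : y ∈ Set.Ioo (0:ℝ) r := by rwa [interior_Icc] at hy
          exact ((hderiv y (by linarith [hy'.1])).hasDerivWithinAt)
        · intro y hy
          have hy' : y ∈ Set.Ioo (0:ℝ) r := by rwa [interior_Icc] at hy
          have h1 : (0:ℝ) < 1 + y := by linarith [hy'.1]
          rw [hf'eq y (by linarith [hy'.1]), sub_nonneg, div_le_div_iff₀ hrpos h1]
          nlinarith [hy'.1, hy'.2]
      have := hmono (Set.mem_Icc.mpr ⟨le_refl 0, hr0⟩) (Set.mem_Icc.mpr ⟨hx0, hx2⟩) hx0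
      linarith [hf0 ▸ this]
    · have hanti : AntitoneOn f (Set.Icc (-r) 0) := by
        apply antitoneOn_of_hasDerivWithinAt_nonpos (convex_Icc (-r) 0) (f' := f')
        · intro y hy
          exact (hcont y (by linarith [hy.1])).continuousWithinAt
        · intro y hy
          have hy' : y ∈ Set.Ioo (-r) (0:ℝ) := by rwa [interior_Icc] at hy
          exact ((hderiv y (by linarith [hy'.1])).hasDerivWithinAt)
        · intro y hy
          have hy' : y ∈ Set.Ioo (-r) (0:ℝ) := by rwa [interior_Icc] at hy
          have h1 : (0:ℝ) < 1 + y := by linarith [hy'.1]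
          rw [hf'eq y (by linarith [hy'.1]), sub_nonpos, div_le_div_iff₀ h1 hrpos]
          nlinarith [hy'.1, hy'.2]
      have := hanti (Set.mem_Icc.mpr ⟨hx1, le_of_lt hx0⟩)
        (Set.mem_Icc.mpr ⟨by linarith, le_refl 0⟩) (le_of_lt hx0)
      linarith [hf0 ▸ this]
  simp only [hf] at key
  linarith


lemma posdef_conj {n : Type*} [Fintype n] [DecidableEq n] {A B : Matrix n n ℝ}
    (hA : A.PosDef) (hB : IsUnit B.det) : (Bᴴ * A * B).PosDef := by
  exact hA.conjTranspose_mul_mul_same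
    (Matrix.mulVec_injective_iff_isUnit.mpr ((Matrix.isUnit_iff_isUnit_det B).mpr hB))

set_option maxHeartbeats 1000000

/-- Let `Θ*` be symmetric positive definite, `M > 2`, and `Δ` symmetric
with Fisher norm `‖Δ‖_{F*}² = Tr(Θ*⁻¹ Δ Θ*⁻¹ Δ) ≤ 1/(2M²)`.  Then `Θ* + Δ` is positive
definite and the first-order Taylor remainder of the Gaussian negative log-likelihood
satisfies `δL(Δ; Θ*) ≥ ((M-2)/(2(M-1))) ‖Δ‖_{F*}²`. -/
theorem stmt_7 (p : ℕ) (Θ : Matrix (Fin p) (Fin p) ℝ) (hΘsymm : Θ.IsSymm) (hΘ : Θ.PosDef)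
    (Δ : Matrix (Fin p) (Fin p) ℝ) (hΔ : Δ.IsSymm) (M : ℝ) (hM : 2 < M)
    (hball : Matrix.trace (Θ⁻¹ * Δ * Θ⁻¹ * Δ) ≤ 1 / (2 * M ^ 2)) :
    (Θ + Δ).PosDef ∧
      Matrix.trace (Θ⁻¹ * Δ) - Real.log ((Θ + Δ).det) + Real.log (Θ.det) ≥
        ((M - 2) / (2 * (M - 1))) * Matrix.trace (Θ⁻¹ * Δ * Θ⁻¹ * Δ) := by
  classical
  have hM0 : (0:ℝ) < M := by linarith
  have hT : (Θ⁻¹).PosDef := hΘ.inv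
  set R := CFC.sqrt (Θ⁻¹) with hRdef
  have hRH : R.IsHermitian := (Matrix.nonneg_iff_posSemidef.mp (CFC.sqrt_nonneg (Θ⁻¹))).1
  have hRR : R * R = Θ⁻¹ := CFC.sqrt_mul_sqrt_self _ (Matrix.nonneg_iff_posSemidef.mpr hT.posSemidef)
  have hΘdet : IsUnit Θ.det := isUnit_iff_ne_zero.mpr hΘ.det_pos.ne'
  have hRdet : IsUnit R.det := by
    have h1 : R.det * R.det = (Θ⁻¹).det := by rw [← det_mul, hRR]
    have h2 : (Θ⁻¹).det ≠ 0 := hT.det_pos.ne'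
    exact isUnit_iff_ne_zero.mpr (fun h => h2 (by rw [← h1, h, mul_zero]))
  set Q := R⁻¹ with hQdef
  have hQR : Q * R = 1 := nonsing_inv_mul R hRdet
  have hRQ : R * Q = 1 := mul_nonsing_inv R hRdet
  have hQQ : Q * Q = Θ := by
    rw [hQdef, ← Matrix.mul_inv_rev, hRR, Matrix.nonsing_inv_nonsing_inv _ hΘdet]
  have hQH : Q.IsHermitian := hRH.inv
  have hQdet : IsUnit Q.det := IsUnit.of_mul_eq_one R.det (by rw [← det_mul, hQR, det_one])
  set S := R * Δ * R with hSdef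
  have hΔH : Δ.IsHermitian := hΔ
  have hSH : S.IsHermitian := by
    show (R * Δ * R)ᴴ = R * Δ * R
    rw [conjTranspose_mul, conjTranspose_mul, hRH.eq, hΔH.eq, mul_assoc]
  have htr1 : trace (Θ⁻¹ * Δ) = trace S := by
    rw [← hRR, ← Matrix.trace_mul_cycle R Δ R]
  have e1 : Θ⁻¹ * Δ * Θ⁻¹ * Δ = R * (R * Δ * R * R * Δ) := by
    rw [← hRR]; simp only [mul_assoc]
  have e2 : (R * Δ * R * R * Δ) * R = S * S := by rw [hSdef]; simp only [mul_assoc]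
  have htr2 : trace (Θ⁻¹ * Δ * Θ⁻¹ * Δ) = trace (S * S) := by
    rw [e1, Matrix.trace_mul_comm, e2]
  have hQSQ : Q * S * Q = Δ := by
    have h1 : Q * S * Q = (Q * R) * (Δ * (R * Q)) := by rw [hSdef]; simp only [mul_assoc]
    rw [h1, hQR, hRQ, one_mul, mul_one]
  have hcong : Θ + Δ = Q * (1 + S) * Q := by
    rw [mul_add, mul_one, add_mul, hQQ, hQSQ]
  -- spectral theory
  set U : Matrix (Fin p) (Fin p) ℝ := (Matrix.IsHermitian.eigenvectorUnitary hSH : Matrix (Fin p) (Fin p) ℝ) with hUdef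
  set μ := hSH.eigenvalues with hμdef
  have hUU' : U * star U = 1 :=
    Matrix.mem_unitaryGroup_iff.mp (Matrix.IsHermitian.eigenvectorUnitary hSH).2
  have hUU : star U * U = 1 :=
    Matrix.mem_unitaryGroup_iff'.mp (Matrix.IsHermitian.eigenvectorUnitary hSH).2
  have hspec : S = U * diagonal μ * star U := by
    have := hSH.spectral_theorem
    simpa [RCLike.ofReal_real_eq_id] using this
  have hsum1 : trace S = ∑ i, μ i := by
    rw [hspec, Matrix.trace_mul_cycle, hUU, one_mul, trace_diagonal]
  have e3 : S * S = U * (diagonal μ * diagonal μ) * star U := by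
    rw [hspec]
    have h1 : (U * diagonal μ * star U) * (U * diagonal μ * star U)
        = U * diagonal μ * ((star U * U) * (diagonal μ * star U)) := by simp only [mul_assoc]
    rw [h1, hUU, one_mul]
    simp only [mul_assoc]
  have hsum2 : trace (S * S) = ∑ i, μ i ^ 2 := by
    rw [e3, Matrix.trace_mul_cycle, hUU, one_mul, diagonal_mul_diagonal, trace_diagonal]
    simp [pow_two]
  have e4 : 1 + S = U * diagonal (fun i => 1 + μ i) * star U := by
    have h1 : U * (1 + diagonal μ) * star U = 1 + U * diagonal μ * star U := by
      rw [mul_add, mul_one, add_mul, hUU']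
    have h2 : (1 : Matrix (Fin p) (Fin p) ℝ) + diagonal μ = diagonal (fun i => 1 + μ i) := by
      rw [← diagonal_one, diagonal_add]
    rw [hspec, ← h1, h2]
  -- eigenvalue bounds
  set t := trace (Θ⁻¹ * Δ * Θ⁻¹ * Δ) with htdef
  have htsum : t = ∑ i, μ i ^ 2 := htr2.trans hsum2
  have ht0 : (0:ℝ) ≤ t := htsum ▸ Finset.sum_nonneg (fun i _ => sq_nonneg _)
  have hμbd : ∀ i, |μ i| ≤ 1 / M := by
    intro i
    have h1 : μ i ^ 2 ≤ t := htsum ▸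
      Finset.single_le_sum (f := fun i => μ i ^ 2) (fun i _ => sq_nonneg _) (Finset.mem_univ i)
    have hM2 : (0:ℝ) < M ^ 2 := by positivity
    have h2 : μ i ^ 2 ≤ (1 / M) ^ 2 := by
      rw [div_pow, one_pow]
      calc μ i ^ 2 ≤ 1 / (2 * M ^ 2) := le_trans h1 hball
        _ ≤ 1 / M ^ 2 := one_div_le_one_div_of_le hM2 (by linarith)
    have := Real.sqrt_le_sqrt h2
    rwa [Real.sqrt_sq_eq_abs, Real.sqrt_sq (by positivity)] at this
  have hr1 : (1:ℝ) / M < 1 := by rw [div_lt_one hM0]; linarith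
  have hpos : ∀ i, 0 < 1 + μ i := by
    intro i
    have := (abs_le.mp (hμbd i)).1
    linarith
  -- positive definiteness
  have hdiagPD : (diagonal (fun i => 1 + μ i)).PosDef := Matrix.posDef_diagonal_iff.mpr hpos
  have hUdet : IsUnit (star U).det :=
    IsUnit.of_mul_eq_one U.det (by rw [← det_mul, hUU, det_one])
  have h1S : (1 + S).PosDef := by
    have h := posdef_conj hdiagPD hUdet
    rw [show (star U)ᴴ = U from by rw [star_eq_conjTranspose, conjTranspose_conjTranspose]] at h
    rw [e4]; exact h
  have hΘΔPD : (Θ + Δ).PosDef := by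
    have h := posdef_conj h1S hQdet
    rw [hQH.eq] at h
    rw [hcong]; exact h
  refine ⟨hΘΔPD, ?_⟩
  -- determinant and logs
  have hdet1S : (1 + S).det = ∏ i, (1 + μ i) := by
    rw [e4, det_mul, det_mul, det_diagonal]
    have h1 : U.det * (star U).det = 1 := by rw [← det_mul, hUU', det_one]
    calc U.det * (∏ i, (1 + μ i)) * (star U).det
        = (U.det * (star U).det) * ∏ i, (1 + μ i) := by ring
      _ = ∏ i, (1 + μ i) := by rw [h1, one_mul]
  have hdet1Spos : 0 < (1 + S).det := by
    rw [hdet1S]; exact Finset.prod_pos (fun i _ => hpos i)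
  have hdetΘΔ : (Θ + Δ).det = Θ.det * (1 + S).det := by
    rw [hcong, det_mul, det_mul]
    have h1 : Q.det * Q.det = Θ.det := by rw [← det_mul, hQQ]
    calc Q.det * (1 + S).det * Q.det = (Q.det * Q.det) * (1 + S).det := by ring
      _ = Θ.det * (1 + S).det := by rw [h1]
  have hlog : Real.log ((Θ + Δ).det) = Real.log Θ.det + Real.log ((1 + S).det) := by
    rw [hdetΘΔ, Real.log_mul hΘ.det_pos.ne' hdet1Spos.ne']
  have hlogsum : Real.log ((1 + S).det) = ∑ i, Real.log (1 + μ i) := by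
    rw [hdet1S, Real.log_prod (fun i _ => (hpos i).ne')]
  -- scalar inequality, summed
  have key : ∀ i, μ i ^ 2 / (2 * (1 + 1/M)) ≤ μ i - Real.log (1 + μ i) := fun i =>
    log_quad_bound (by positivity) hr1 (hμbd i)
  have hsumineq : (∑ i, μ i ^ 2) / (2 * (1 + 1/M)) ≤ ∑ i, (μ i - Real.log (1 + μ i)) := by
    rw [Finset.sum_div]; exact Finset.sum_le_sum (fun i _ => key i)
  have hcoef : (M - 2) / (2 * (M - 1)) * t ≤ t / (2 * (1 + 1/M)) := by
    have h1 : (M - 2) / (2 * (M - 1)) ≤ 1 / (2 * (1 + 1/M)) := by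
      rw [div_le_div_iff₀ (by linarith) (by positivity)]
      have hMinv : M * (1/M) = 1 := mul_one_div_cancel hM0.ne'
      nlinarith [mul_pos hM0 (show (0:ℝ) < 1/M by positivity)]
    calc (M - 2) / (2 * (M - 1)) * t ≤ 1 / (2 * (1 + 1/M)) * t :=
          mul_le_mul_of_nonneg_right h1 ht0
      _ = t / (2 * (1 + 1/M)) := by ring
  rw [ge_iff_le, htr1, hlog, hsum1, hlogsum]
  have hfin : (∑ i, μ i) - (Real.log Θ.det + ∑ i, Real.log (1 + μ i)) + Real.log Θ.det
      = ∑ i, (μ i - Real.log (1 + μ i)) := by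
    rw [Finset.sum_sub_distrib]; ring
  rw [hfin]
  calc (M - 2) / (2 * (M - 1)) * t ≤ t / (2 * (1 + 1/M)) := hcoef
    _ = (∑ i, μ i ^ 2) / (2 * (1 + 1/M)) := by rw [htsum]
    _ ≤ ∑ i, (μ i - Real.log (1 + μ i)) := hsumineq
end

section
/- (Lemma: RSC condition.) Let Θ* be a real symmetric positive definite p×p matrix satisfying the Restricted Fisher Eigenvalue condition with constant κ*_min > 0 relative to the structural error sets C(E) and C(U), and let M > 2. Then for every Δ ∈ C(E) ∪ C(U) with ‖Δ‖_{F*}² ≤ 1/(2M²), the restricted strong convexity bound δL(Δ; Θ*) ≥ κ_L · ‖Δ‖_F² holds with curvature parameter κ_L := ((M−2)/(2(M−1))) κ*_min and zero tolerance, where δL(Δ; Θ*) := Tr(Θ*⁻¹Δ) − log det(Θ* + Δ) + log det(Θ*). -/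
open Matrix Kronecker

/-- Squared Frobenius norm of a real matrix. -/
def frobSq {p : ℕ} (A : Matrix (Fin p) (Fin p) ℝ) : ℝ := ∑ i, ∑ j, (A i j) ^ 2

/-- Frobenius norm of a real matrix. -/
noncomputable def frobNorm {p : ℕ} (A : Matrix (Fin p) (Fin p) ℝ) : ℝ := Real.sqrt (frobSq A)

/-- Entrywise ℓ1 norm of a real matrix. -/
def l1Norm {p : ℕ} (A : Matrix (Fin p) (Fin p) ℝ) : ℝ := ∑ i, ∑ j, |A i j|

/-- Entrywise maximum (ℓ∞) norm of a real matrix. -/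
noncomputable def linfNorm {p : ℕ} (A : Matrix (Fin p) (Fin p) ℝ) : ℝ := ⨆ i, ⨆ j, |A i j|

/-- The (unordered) singular values of a square real matrix: the square roots of the
eigenvalues of `Aᵀ A`. -/
noncomputable def sval {m : Type*} [Fintype m] [DecidableEq m] (A : Matrix m m ℝ) : m → ℝ :=
  fun i => Real.sqrt ((Matrix.isHermitian_conjTranspose_mul_self A).eigenvalues i)

/-- Nuclear norm: the sum of the singular values. -/
noncomputable def nuclearNorm {m : Type*} [Fintype m] [DecidableEq m] (A : Matrix m m ℝ) : ℝ :=
  ∑ i, sval A i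

/-- Spectral norm: the maximum singular value. -/
noncomputable def specNorm {m : Type*} [Fintype m] [DecidableEq m] (A : Matrix m m ℝ) : ℝ :=
  ⨆ i, sval A i

/-- Squared Fisher norm `‖Δ‖_{F*}² := Tr (Θ⁻¹ Δ Θ⁻¹ Δ)`. -/
noncomputable def fisherSq {p : ℕ} (Θ Δ : Matrix (Fin p) (Fin p) ℝ) : ℝ :=
  Matrix.trace (Θ⁻¹ * Δ * Θ⁻¹ * Δ)

/-- Fisher norm `‖Δ‖_{F*}`. -/
noncomputable def fisherNorm {p : ℕ} (Θ Δ : Matrix (Fin p) (Fin p) ℝ) : ℝ :=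
  Real.sqrt (fisherSq Θ Δ)

/-- Fisher inner product `⟨Δ_A, Δ_B⟩_{F*} := Tr (Θ⁻¹ Δ_A Θ⁻¹ Δ_B)`. -/
noncomputable def fisherInner {p : ℕ} (Θ ΔA ΔB : Matrix (Fin p) (Fin p) ℝ) : ℝ :=
  Matrix.trace (Θ⁻¹ * ΔA * Θ⁻¹ * ΔB)

/-- Restriction of a matrix to an index set `E` (zero outside `E`). -/
def restrict {p : ℕ} (E : Finset (Fin p × Fin p)) (A : Matrix (Fin p) (Fin p) ℝ) :
    Matrix (Fin p) (Fin p) ℝ :=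
  Matrix.of fun i j => if (i, j) ∈ E then A i j else 0

/-- Structural error set `C(E)` for the sparse component, centered at `S*`. -/
def CE {p : ℕ} (E : Finset (Fin p × Fin p)) (Sstar : Matrix (Fin p) (Fin p) ℝ) :
    Set (Matrix (Fin p) (Fin p) ℝ) :=
  {Δ | Δ.IsSymm ∧
    l1Norm (restrict Eᶜ Δ) ≤ 3 * l1Norm (restrict E Δ) + 4 * l1Norm (restrict Eᶜ Sstar)}

/-- Structural error set `C(U)` for the low-rank component, centered at `L*`;
`Pperp` is the orthogonal projection matrix onto `U^⊥`. -/
noncomputable def CU {p : ℕ} (Pperp Lstar : Matrix (Fin p) (Fin p) ℝ) :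
    Set (Matrix (Fin p) (Fin p) ℝ) :=
  {Δ | Δ.IsSymm ∧
    nuclearNorm (Pperp * Δ * Pperp) ≤
      3 * nuclearNorm (Δ - Pperp * Δ * Pperp) + 4 * nuclearNorm (Pperp * Lstar * Pperp)}

/-- `P` is an orthogonal projection matrix. -/
def IsOrthProj {p : ℕ} (P : Matrix (Fin p) (Fin p) ℝ) : Prop := P.IsSymm ∧ P * P = P

/-- Restricted Fisher Eigenvalue condition with constant `κ`. -/
noncomputable def RFE {p : ℕ} (Θ : Matrix (Fin p) (Fin p) ℝ) (E : Finset (Fin p × Fin p))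
    (Sstar Pperp Lstar : Matrix (Fin p) (Fin p) ℝ) (κ : ℝ) : Prop :=
  ∀ Δ ∈ CE E Sstar ∪ CU Pperp Lstar, fisherSq Θ Δ ≥ κ * frobSq Δ

/-- Structural Fisher Incoherence condition with parameters `(λ, μ, s, r, M)` and RFE
constant `κ`: the Fisher information `F* = Θ⁻¹ ⊗ Θ⁻¹`, viewed as an operator on vectorized
`p × p` matrices, composed with the projections onto (the subspaces associated with)
`E`, `E^c`, `U`, `U^⊥`, has maximum singular value at most `κ / (c₁ Λ²)`. -/
noncomputable def SFI {p : ℕ} (Θ : Matrix (Fin p) (Fin p) ℝ) (E : Finset (Fin p × Fin p))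
    (Pperp : Matrix (Fin p) (Fin p) ℝ) (lam mu : ℝ) (s r : ℕ) (M κ : ℝ) : Prop :=
  let F : Matrix (Fin p × Fin p) (Fin p × Fin p) ℝ := Θ⁻¹ ⊗ₖ Θ⁻¹
  let PE : Matrix (Fin p × Fin p) (Fin p × Fin p) ℝ :=
    Matrix.diagonal (fun q => if q ∈ E then (1 : ℝ) else 0)
  let PEperp : Matrix (Fin p × Fin p) (Fin p × Fin p) ℝ := 1 - PE
  let PUperp : Matrix (Fin p × Fin p) (Fin p × Fin p) ℝ := Pperp ⊗ₖ Pperp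
  let PU : Matrix (Fin p × Fin p) (Fin p × Fin p) ℝ := 1 - PUperp
  let Λ : ℝ := 2 + 3 * max (lam * Real.sqrt s / (mu * Real.sqrt r))
    (mu * Real.sqrt r / (lam * Real.sqrt s))
  let c₁ : ℝ := 16 * M / (M - 6)
  specNorm (PE * F * PU) ≤ κ / (c₁ * Λ ^ 2) ∧
    specNorm (PEperp * F * PU) ≤ κ / (c₁ * Λ ^ 2) ∧
    specNorm (PE * F * PUperp) ≤ κ / (c₁ * Λ ^ 2) ∧
    specNorm (PEperp * F * PUperp) ≤ κ / (c₁ * Λ ^ 2)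


-- Auxiliary lemmas

lemma scalar_key {M x : ℝ} (hM : 2 < M) (hx : |x| ≤ 1 / (Real.sqrt 2 * M)) :
    (M - 2) / (2 * (M - 1)) * x ^ 2 ≤ x - Real.log (1 + x) := by
  set q : ℝ := (M - 2) / (2 * (M - 1)) with hq
  set c : ℝ := 1 / (Real.sqrt 2 * M) with hc
  have hs1 : (1 : ℝ) ≤ Real.sqrt 2 := by
    rw [show (1:ℝ) = Real.sqrt 1 by simp]
    exact Real.sqrt_le_sqrt (by norm_num)
  have hsM : (2 : ℝ) < Real.sqrt 2 * M := by nlinarith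
  have hc0 : 0 < c := by rw [hc]; positivity
  have hchalf : c < 1 / 2 := by
    rw [hc]
    rw [div_lt_div_iff₀ (by linarith) (by norm_num)]
    linarith
  have hM1 : (0:ℝ) < M - 1 := by linarith
  have hq0 : 0 ≤ q := by rw [hq]; apply div_nonneg <;> linarith
  have h2q : 2 * q < 1 := by
    have : q < 1 / 2 := by
      rw [hq, div_lt_div_iff₀ (by linarith) (by norm_num)]
      linarith
    linarith
  have hcM : c * (M - 2) ≤ 1 := by
    rw [hc, div_mul_eq_mul_div, div_le_one (by linarith)]
    nlinarith
  -- key: for y ∈ [-c, c], 2*q*(1+y) ≤ 1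
  have hqy : ∀ y : ℝ, y ≤ c → 2 * q * (1 + y) ≤ 1 := by
    intro y hy
    have : 2 * q = (M - 2) / (M - 1) := by rw [hq]; field_simp
    rw [this, div_mul_eq_mul_div, div_le_one hM1]
    nlinarith
  set g : ℝ → ℝ := fun y => y - Real.log (1 + y) - q * y ^ 2 with hg
  have hd : ∀ y : ℝ, -1 < y → HasDerivAt g (1 - (1 + y)⁻¹ - q * (2 * y)) y := by
    intro y hy
    have h1 : HasDerivAt (fun z : ℝ => 1 + z) 1 y := by
      simpa using (hasDerivAt_id y).const_add 1
    have h2 : HasDerivAt (fun z : ℝ => Real.log (1 + z)) ((1 + y)⁻¹ * 1) y :=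
      (Real.hasDerivAt_log (by linarith)).comp y h1
    have h3 : HasDerivAt (fun z : ℝ => q * z ^ 2) (q * (2 * y ^ 1)) y :=
      (hasDerivAt_pow 2 y).const_mul q
    have := ((hasDerivAt_id y).sub h2).sub h3
    simp at this; exact this
  have hderiv_sign : ∀ y : ℝ, -1 < y → y ≤ c →
      (1 - (1 + y)⁻¹ - q * (2 * y)) * (1 + y) = y * (1 - 2 * q * (1 + y)) := by
    intro y hy _
    have h1 : (1:ℝ) + y ≠ 0 := by linarith
    field_simp
    ring
  have hmono : MonotoneOn g (Set.Icc 0 c) := by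
    apply monotoneOn_of_deriv_nonneg (convex_Icc 0 c)
    · intro y hy
      exact (hd y (by linarith [hy.1])).continuousAt.continuousWithinAt
    · intro y hy
      rw [interior_Icc] at hy
      exact (hd y (by linarith [hy.1])).differentiableAt.differentiableWithinAt
    · intro y hy
      rw [interior_Icc] at hy
      rw [(hd y (by linarith [hy.1])).deriv]
      have h1y : (0:ℝ) < 1 + y := by linarith [hy.1]
      have hk := hderiv_sign y (by linarith [hy.1]) (le_of_lt hy.2)
      have hb := hqy y (le_of_lt hy.2)
      have hy0 : 0 < y := hy.1
      nlinarith [mul_pos hy0 h1y]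
  have hanti : AntitoneOn g (Set.Icc (-c) 0) := by
    apply antitoneOn_of_deriv_nonpos (convex_Icc (-c) 0)
    · intro y hy
      exact (hd y (by linarith [hy.1, hchalf, hc0])).continuousAt.continuousWithinAt
    · intro y hy
      rw [interior_Icc] at hy
      exact (hd y (by linarith [hy.1, hchalf, hc0])).differentiableAt.differentiableWithinAt
    · intro y hy
      rw [interior_Icc] at hy
      have h1y : (0:ℝ) < 1 + y := by linarith [hy.1, hchalf, hc0]
      rw [(hd y (by linarith)).deriv]
      have hk := hderiv_sign y (by linarith) (by linarith [hy.2, hc0])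
      have hb := hqy y (by linarith [hy.2, hc0])
      have hy0 : y < 0 := hy.2
      nlinarith [mul_pos (neg_pos.mpr hy0) h1y]
  have hg0 : g 0 = 0 := by simp [hg]
  have habs := abs_le.mp hx
  have hgx : 0 ≤ g x := by
    rcases le_total x 0 with h | h
    · have := hanti (Set.mem_Icc.mpr ⟨habs.1, h⟩) (Set.mem_Icc.mpr ⟨by linarith, le_refl 0⟩) h
      rw [hg0] at this; exact this
    · have := hmono (Set.mem_Icc.mpr ⟨le_refl 0, hc0.le⟩) (Set.mem_Icc.mpr ⟨h, habs.2⟩) h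
      rw [hg0] at this; exact this
  have : g x = x - Real.log (1 + x) - q * x ^ 2 := rfl
  linarith

section AuxSpectral


variable {p : ℕ} {W : Matrix (Fin p) (Fin p) ℝ} (hW : W.IsHermitian)

lemma spec_decomp :
    W = (hW.eigenvectorUnitary : Matrix (Fin p) (Fin p) ℝ) * Matrix.diagonal hW.eigenvalues *
      star (hW.eigenvectorUnitary : Matrix (Fin p) (Fin p) ℝ) := by
  have h := hW.spectral_theorem
  have : (RCLike.ofReal ∘ hW.eigenvalues : Fin p → ℝ) = hW.eigenvalues := by
    funext i; simp [RCLike.ofReal]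
  rwa [this] at h

lemma trace_eq_sum_eig : Matrix.trace W = ∑ i, hW.eigenvalues i := by
  conv_lhs => rw [spec_decomp hW]
  rw [Matrix.trace_mul_cycle]
  rw [show star (hW.eigenvectorUnitary : Matrix (Fin p) (Fin p) ℝ) *
      (hW.eigenvectorUnitary : Matrix (Fin p) (Fin p) ℝ) = 1 from
    Matrix.mem_unitaryGroup_iff'.mp hW.eigenvectorUnitary.2]
  simp [Matrix.trace_diagonal]

lemma trace_sq_eq_sum_eig_sq : Matrix.trace (W * W) = ∑ i, hW.eigenvalues i ^ 2 := by
  have hVV : (hW.eigenvectorUnitary : Matrix (Fin p) (Fin p) ℝ) *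
      star (hW.eigenvectorUnitary : Matrix (Fin p) (Fin p) ℝ) = 1 :=
    Matrix.mem_unitaryGroup_iff.mp hW.eigenvectorUnitary.2
  have hVV' : star (hW.eigenvectorUnitary : Matrix (Fin p) (Fin p) ℝ) *
      (hW.eigenvectorUnitary : Matrix (Fin p) (Fin p) ℝ) = 1 :=
    Matrix.mem_unitaryGroup_iff'.mp hW.eigenvectorUnitary.2
  conv_lhs => rw [spec_decomp hW]
  set V : Matrix (Fin p) (Fin p) ℝ := (hW.eigenvectorUnitary : Matrix (Fin p) (Fin p) ℝ)
  set D : Matrix (Fin p) (Fin p) ℝ := Matrix.diagonal hW.eigenvalues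
  have : V * D * star V * (V * D * star V) = V * (D * D) * star V := by
    calc V * D * star V * (V * D * star V) = V * D * (star V * V) * D * star V := by
          simp only [Matrix.mul_assoc]
      _ = V * (D * D) * star V := by rw [hVV']; simp only [Matrix.mul_one, Matrix.mul_assoc]
  rw [this, Matrix.trace_mul_cycle, ← Matrix.mul_assoc, hVV', Matrix.one_mul]
  simp [D, Matrix.diagonal_mul_diagonal, Matrix.trace_diagonal, sq]

lemma det_one_add_eq_prod : (1 + W).det = ∏ i, (1 + hW.eigenvalues i) := by
  have hVV : (hW.eigenvectorUnitary : Matrix (Fin p) (Fin p) ℝ) *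
      star (hW.eigenvectorUnitary : Matrix (Fin p) (Fin p) ℝ) = 1 :=
    Matrix.mem_unitaryGroup_iff.mp hW.eigenvectorUnitary.2
  set V : Matrix (Fin p) (Fin p) ℝ := (hW.eigenvectorUnitary : Matrix (Fin p) (Fin p) ℝ)
  set D : Matrix (Fin p) (Fin p) ℝ := Matrix.diagonal hW.eigenvalues
  have h1 : (1 : Matrix (Fin p) (Fin p) ℝ) + W = V * (1 + D) * star V := by
    rw [Matrix.mul_add, Matrix.add_mul, Matrix.mul_one]
    conv_lhs => rw [spec_decomp hW, ← hVV]
  rw [h1, Matrix.det_mul, Matrix.det_mul]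
  have : V.det * (1 + D).det * (star V).det = (1 + D).det * (V.det * (star V).det) := by ring
  rw [this, ← Matrix.det_mul, hVV, Matrix.det_one, mul_one]
  have : (1 : Matrix (Fin p) (Fin p) ℝ) + D = Matrix.diagonal (fun i => 1 + hW.eigenvalues i) := by
    rw [show (1 : Matrix (Fin p) (Fin p) ℝ) = Matrix.diagonal (fun _ => 1) from
      (Matrix.diagonal_one).symm, Matrix.diagonal_add]
  rw [this, Matrix.det_diagonal]

end AuxSpectral

/-- **RSC condition.** If `Θ*` satisfies the Restricted Fisher Eigenvalue
condition with constant `κ*_min > 0` relative to `C(E)` and `C(U)`, and `M > 2`, then for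
every `Δ ∈ C(E) ∪ C(U)` with `‖Δ‖_{F*}² ≤ 1/(2M²)`, the first-order Taylor remainder of
the Gaussian negative log-likelihood satisfies
`δL(Δ; Θ*) ≥ ((M-2)/(2(M-1))) κ*_min ‖Δ‖_F²`. -/
theorem stmt_8 (p : ℕ) (Θ Sstar Lstar Pperp : Matrix (Fin p) (Fin p) ℝ)
    (hΘsymm : Θ.IsSymm) (hΘ : Θ.PosDef) (hSstar : Sstar.IsSymm) (hLstar : Lstar.IsSymm)
    (E : Finset (Fin p × Fin p)) (hP : IsOrthProj Pperp)
    (κ : ℝ) (hκ : 0 < κ) (hRFE : RFE Θ E Sstar Pperp Lstar κ)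
    (M : ℝ) (hM : 2 < M) :
    ∀ Δ ∈ CE E Sstar ∪ CU Pperp Lstar, fisherSq Θ Δ ≤ 1 / (2 * M ^ 2) →
      Matrix.trace (Θ⁻¹ * Δ) - Real.log ((Θ + Δ).det) + Real.log Θ.det ≥
        ((M - 2) / (2 * (M - 1))) * κ * frobSq Δ := by
  intro Δ hΔ hfish
  have hΔsymm : Δ.IsSymm := by
    rcases hΔ with h | h
    exacts [h.1, h.1]
  have hRFEΔ : fisherSq Θ Δ ≥ κ * frobSq Δ := hRFE Δ hΔ
  classical
  have hΔherm : Δ.IsHermitian := by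
    rw [Matrix.IsHermitian, Matrix.conjTranspose_eq_transpose_of_trivial]; exact hΔsymm
  obtain ⟨R, hRherm, hRR⟩ : ∃ R : Matrix (Fin p) (Fin p) ℝ, R.IsHermitian ∧ R * R = Θ :=
    by open scoped MatrixOrder in exact ⟨CFC.sqrt Θ, (CFC.sqrt_nonneg Θ).posSemidef.1,
      CFC.sqrt_mul_sqrt_self Θ hΘ.posSemidef.nonneg⟩
  have hdetΘ : 0 < Θ.det := hΘ.det_pos
  have hdetR : IsUnit R.det := by
    have h : R.det * R.det = Θ.det := by rw [← Matrix.det_mul, hRR]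
    exact isUnit_iff_ne_zero.mpr (fun h0 => by rw [h0, mul_zero] at h; linarith)
  have hRinv : R * R⁻¹ = 1 := Matrix.mul_nonsing_inv R hdetR
  have hRinv' : R⁻¹ * R = 1 := Matrix.nonsing_inv_mul R hdetR
  have hΘinv : Θ⁻¹ = R⁻¹ * R⁻¹ := by rw [← hRR, Matrix.mul_inv_rev]
  set W := R⁻¹ * Δ * R⁻¹ with hWdef
  have hWherm : W.IsHermitian := by
    have h1 : R⁻¹.IsHermitian := hRherm.inv
    show Wᴴ = W
    rw [hWdef, Matrix.conjTranspose_mul, Matrix.conjTranspose_mul, h1.eq, hΔherm.eq]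
    simp only [Matrix.mul_assoc]
  set μ := hWherm.eigenvalues with hμdef
  have htrW : Matrix.trace W = ∑ i, μ i := trace_eq_sum_eig hWherm
  have htrWW : Matrix.trace (W * W) = ∑ i, μ i ^ 2 := trace_sq_eq_sum_eig_sq hWherm
  have hdet1W : (1 + W).det = ∏ i, (1 + μ i) := det_one_add_eq_prod hWherm
  have hfish_eq : fisherSq Θ Δ = Matrix.trace (W * W) := by
    rw [fisherSq, hΘinv]
    rw [show R⁻¹ * R⁻¹ * Δ * (R⁻¹ * R⁻¹) * Δ = R⁻¹ * (R⁻¹ * Δ * R⁻¹ * R⁻¹ * Δ) from by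
      simp only [Matrix.mul_assoc]]
    rw [Matrix.trace_mul_comm]
    congr 1
    rw [hWdef]
    simp only [Matrix.mul_assoc]
  have htr_eq : Matrix.trace (Θ⁻¹ * Δ) = Matrix.trace W := by
    rw [hΘinv, Matrix.mul_assoc, Matrix.trace_mul_comm, hWdef]
  have hsum_sq : ∑ i, μ i ^ 2 = fisherSq Θ Δ := by rw [hfish_eq, htrWW]
  -- eigenvalue bound
  have hs1 : (1 : ℝ) ≤ Real.sqrt 2 := by
    rw [show (1:ℝ) = Real.sqrt 1 by simp]
    exact Real.sqrt_le_sqrt (by norm_num)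
  have hM0 : (0:ℝ) < M := by linarith
  have hbound : ∀ i, |μ i| ≤ 1 / (Real.sqrt 2 * M) := by
    intro i
    have h1 : μ i ^ 2 ≤ 1 / (2 * M ^ 2) :=
      le_trans (Finset.single_le_sum (f := fun i => μ i ^ 2)
        (fun i _ => sq_nonneg _) (Finset.mem_univ i)) (by rw [hsum_sq]; exact hfish)
    have h2 : (1 / (Real.sqrt 2 * M)) ^ 2 = 1 / (2 * M ^ 2) := by
      rw [div_pow, mul_pow, Real.sq_sqrt (by norm_num : (0:ℝ) ≤ 2)]
      norm_num
    calc |μ i| = Real.sqrt ((μ i) ^ 2) := (Real.sqrt_sq_eq_abs _).symm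
      _ ≤ Real.sqrt (1 / (2 * M ^ 2)) := Real.sqrt_le_sqrt h1
      _ = 1 / (Real.sqrt 2 * M) := by rw [← h2, Real.sqrt_sq (by positivity)]
  have hclt : 1 / (Real.sqrt 2 * M) < 1 := by
    rw [div_lt_one (by nlinarith)]
    nlinarith
  have hpos1 : ∀ i, 0 < 1 + μ i := by
    intro i
    have := abs_le.mp (hbound i)
    linarith [this.1]
  -- Θ + Δ = R (1+W) R
  have hRWR : R * W * R = Δ := by
    rw [hWdef, show R * (R⁻¹ * Δ * R⁻¹) * R = R * R⁻¹ * Δ * (R⁻¹ * R) from by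
      simp only [Matrix.mul_assoc], hRinv, hRinv', Matrix.one_mul, Matrix.mul_one]
  have hΘΔ : Θ + Δ = R * (1 + W) * R := by
    rw [Matrix.mul_add, Matrix.mul_one, Matrix.add_mul, hRR, hRWR]
  have hdet_eq : (Θ + Δ).det = Θ.det * ∏ i, (1 + μ i) := by
    rw [hΘΔ, Matrix.det_mul, Matrix.det_mul, hdet1W]
    rw [show R.det * (∏ i, (1 + μ i)) * R.det = R.det * R.det * ∏ i, (1 + μ i) from by ring]
    rw [← Matrix.det_mul, hRR]
  have hprodpos : 0 < ∏ i, (1 + μ i) := Finset.prod_pos (fun i _ => hpos1 i)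
  have hlog : Real.log ((Θ + Δ).det) = Real.log Θ.det + ∑ i, Real.log (1 + μ i) := by
    rw [hdet_eq, Real.log_mul (ne_of_gt hdetΘ) (ne_of_gt hprodpos),
      Real.log_prod (fun i _ => ne_of_gt (hpos1 i))]
  rw [htr_eq, htrW, hlog]
  have hq0 : 0 ≤ (M - 2) / (2 * (M - 1)) := by apply div_nonneg <;> linarith
  have hkey : ∀ i, (M - 2) / (2 * (M - 1)) * μ i ^ 2 ≤ μ i - Real.log (1 + μ i) :=
    fun i => scalar_key hM (hbound i)
  have hsum : (M - 2) / (2 * (M - 1)) * fisherSq Θ Δ ≤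
      ∑ i, (μ i - Real.log (1 + μ i)) := by
    rw [← hsum_sq, Finset.mul_sum]
    exact Finset.sum_le_sum (fun i _ => hkey i)
  rw [Finset.sum_sub_distrib] at hsum
  have hlast : (M - 2) / (2 * (M - 1)) * (κ * frobSq Δ) ≤
      (M - 2) / (2 * (M - 1)) * fisherSq Θ Δ :=
    mul_le_mul_of_nonneg_left hRFEΔ hq0
  have : (M - 2) / (2 * (M - 1)) * κ * frobSq Δ = (M - 2) / (2 * (M - 1)) * (κ * frobSq Δ) := by
    ring
  linarith
end
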